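/- For every positive integer k there exists a finite simple graph H with box_ℓ(H) ≥ k. -/

import Mathlib

universe u

/-- A graph is an interval graph if its vertices can be assigned nonempty closed
intervals of `ℝ` so that distinct vertices are adjacent iff their intervals meet. -/
def IsIntervalGraph {V : Type*} (G : SimpleGraph V) : Prop :=
  ∃ I : V → Set ℝ,
    (∀ v, ∃ a b : ℝ, a ≤ b ∧ I v = Set.Icc a b) ∧
    ∀ u v : V, u ≠ v → (G.Adj u v ↔ (I u ∩ I v).Nonempty)

/-- A co-interval graph is the complement of an interval graph. -/
def IsCoIntervalGraph {V : Type*} (G : SimpleGraph V) : Prop :=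
  IsIntervalGraph Gᶜ

/-- `G` is a vertex-disjoint union of co-interval graphs: its vertex set can be
partitioned (here via the fibers of a map `c`) so that every edge joins two vertices of
the same part and the restriction to each part is a co-interval graph. -/
def IsUnionCoIntervalGraph {V : Type u} (G : SimpleGraph V) : Prop :=
  ∃ (ι : Type u) (c : V → ι),
    (∀ u v : V, G.Adj u v → c u = c v) ∧
    ∀ i : ι, IsCoIntervalGraph (G.induce {v | c v = i})

/-- There is a covering of the edges of `Hᶜ` by finitely many subgraphs
`G 0, …, G (t-1)` of `Hᶜ`, each of which restricted to its non-isolated vertices is a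
co-interval graph, such that every vertex is a non-isolated vertex of at most `s`
of them. -/
def LocalCoverLE {V : Type u} (H : SimpleGraph V) (s : ℕ) : Prop :=
  ∃ (t : ℕ) (G : Fin t → SimpleGraph V),
    (∀ i, G i ≤ Hᶜ) ∧
    (∀ u v : V, Hᶜ.Adj u v → ∃ i, (G i).Adj u v) ∧
    (∀ i, IsCoIntervalGraph ((G i).induce (G i).support)) ∧
    ∀ v : V, {i : Fin t | v ∈ (G i).support}.ncard ≤ s

/-- The local boxicity of `H`. -/
noncomputable def localBoxicity {V : Type u} (H : SimpleGraph V) : ℕ :=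
  sInf {s : ℕ | LocalCoverLE H s}

/-- The union boxicity of `H`: the least `k` such that `Hᶜ` is covered by `k`
subgraphs, each a vertex-disjoint union of co-interval graphs. -/
noncomputable def unionBoxicity {V : Type u} (H : SimpleGraph V) : ℕ :=
  sInf {k : ℕ | ∃ G : Fin k → SimpleGraph V,
    (∀ i, G i ≤ Hᶜ) ∧
    (∀ u v : V, Hᶜ.Adj u v → ∃ i, (G i).Adj u v) ∧
    ∀ i, IsUnionCoIntervalGraph (G i)}

/-- The boxicity of `H`: the least `d` such that `H` is the intersection of `d`
interval graphs on its vertex set. -/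
noncomputable def boxicity {V : Type u} (H : SimpleGraph V) : ℕ :=
  sInf {d : ℕ | ∃ G : Fin d → SimpleGraph V,
    (∀ i, IsIntervalGraph (G i)) ∧
    ∀ u v : V, u ≠ v → (H.Adj u v ↔ ∀ i, (G i).Adj u v)}

def pairGraph {n : ℕ} (f : Fin n → Fin n → Bool) : SimpleGraph (Fin n ⊕ Fin n) where
  Adj x y := ∃ a b, f a b = true ∧
    ((x = Sum.inl a ∧ y = Sum.inr b) ∨ (x = Sum.inr b ∧ y = Sum.inl a))
  symm := by
    constructor
    rintro x y ⟨a, b, hf, (⟨rfl, rfl⟩ | ⟨rfl, rfl⟩)⟩ <;> exact ⟨a, b, hf, by tauto⟩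
  loopless := by
    constructor
    rintro x ⟨a, b, hf, (⟨rfl, h⟩ | ⟨rfl, h⟩)⟩ <;> simp at h

lemma pairGraph_adj {n : ℕ} (f : Fin n → Fin n → Bool) (a b : Fin n) :
    (pairGraph f).Adj (Sum.inl a) (Sum.inr b) ↔ f a b = true := by
  constructor
  · rintro ⟨a', b', hh, (⟨h1, h2⟩ | ⟨h1, h2⟩)⟩
    · cases Sum.inl.inj h1; cases Sum.inr.inj h2; exact hh
    · simp at h1
  · intro hh; exact ⟨a, b, hh, Or.inl ⟨rfl, rfl⟩⟩

lemma pairGraph_inj {n : ℕ} : Function.Injective (pairGraph (n := n)) := by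
  intro f g he
  funext a b
  have h1 : (pairGraph f).Adj (Sum.inl a) (Sum.inr b) ↔
      (pairGraph g).Adj (Sum.inl a) (Sum.inr b) := by rw [he]
  rw [pairGraph_adj, pairGraph_adj] at h1
  cases hf : f a b <;> cases hg : g a b <;> simp [hf, hg] at h1 ⊢

lemma arith (s : ℕ) : 18 * s * (72 * s + 70) < 2 ^ (72 * s + 70) := by
  have h1 : 36 * s + 36 ≤ 2 ^ (36 * s + 35) := by
    have := Nat.lt_two_pow_self (n := 36 * s + 35)
    omega
  calc 18 * s * (72 * s + 70) < (36 * s + 36) * (36 * s + 36) := by nlinarith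
    _ ≤ 2 ^ (36 * s + 35) * 2 ^ (36 * s + 35) := Nat.mul_le_mul h1 h1
    _ = 2 ^ (72 * s + 70) := by rw [← pow_add]; ring_nf

lemma Kle (s n : ℕ) (hn : 5 * s + 5 ≤ n) :
    (s * (n + n) + 1) * ((2 * (s * (n + n)) * (n + n) + 1) *
      (2 * (s * (n + n)) * (n + n) + 1)) + 1 ≤ n ^ 9 := by
  have h2 : 2 ≤ n := by omega
  have e1 : s * (n + n) + 1 ≤ 4 * (s + 1) * n := by nlinarith
  have e2 : 2 * (s * (n + n)) * (n + n) + 1 ≤ 9 * (s + 1) * n ^ 2 := by nlinarith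
  have e3 : 325 * (s + 1) ^ 3 ≤ n ^ 4 := by
    have h5 : 5 * (s + 1) ≤ n := by omega
    have h6 : (5 * (s + 1)) ^ 4 ≤ n ^ 4 := Nat.pow_le_pow_left h5 4
    have h7 : (5 * (s + 1)) ^ 4 = 625 * (s + 1) ^ 3 * (s + 1) := by ring
    have h8 : 1 ≤ s + 1 := by omega
    calc 325 * (s + 1) ^ 3 = 325 * (s + 1) ^ 3 * 1 := by ring
      _ ≤ 625 * (s + 1) ^ 3 * (s + 1) :=
        Nat.mul_le_mul (Nat.mul_le_mul_right _ (by omega)) h8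
      _ ≤ n ^ 4 := by omega
  calc (s * (n + n) + 1) * ((2 * (s * (n + n)) * (n + n) + 1) *
        (2 * (s * (n + n)) * (n + n) + 1)) + 1
      ≤ 4 * (s + 1) * n * (9 * (s + 1) * n ^ 2 * (9 * (s + 1) * n ^ 2)) + 1 :=
        Nat.add_le_add_right (Nat.mul_le_mul e1 (Nat.mul_le_mul e2 e2)) 1
    _ = 324 * (s + 1) ^ 3 * n ^ 5 + 1 := by ring
    _ ≤ 325 * (s + 1) ^ 3 * n ^ 5 := by
        have hp : 1 ≤ (s + 1) ^ 3 * n ^ 5 :=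
          Nat.mul_pos (pow_pos (by omega) 3) (pow_pos (by omega) 5)
        nlinarith [hp]
    _ ≤ n ^ 4 * n ^ 5 := Nat.mul_le_mul_right _ e3
    _ = n ^ 9 := by ring

lemma localCoverLE_mono {V : Type} {H : SimpleGraph V} {s s' : ℕ}
    (h : LocalCoverLE H s) (hs : s ≤ s') : LocalCoverLE H s' := by
  obtain ⟨t, G, h1, h2, h3, h4⟩ := h
  exact ⟨t, G, h1, h2, h3, fun v => le_trans (h4 v) hs⟩

open Classical in
/-- auxiliary single-edge subgraph of `Hᶜ` -/
noncomputable def coverGraph {V : Type} (H : SimpleGraph V) (q : V × V) : SimpleGraph V :=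
  if Hᶜ.Adj q.1 q.2 then SimpleGraph.fromRel (fun x y => x = q.1 ∧ y = q.2) else ⊥

lemma coverGraph_le {V : Type} (H : SimpleGraph V) (q : V × V) : coverGraph H q ≤ Hᶜ := by
  classical
  rw [coverGraph]
  split_ifs with hadj
  · intro u v huv
    rw [SimpleGraph.fromRel_adj] at huv
    obtain ⟨hne, (⟨rfl, rfl⟩ | ⟨rfl, rfl⟩)⟩ := huv
    · exact hadj
    · exact hadj.symm
  · intro u v huv
    simp at huv

lemma coverGraph_adj {V : Type} (H : SimpleGraph V) (q : V × V) (hadj : Hᶜ.Adj q.1 q.2) :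
    (coverGraph H q).Adj q.1 q.2 := by
  classical
  rw [coverGraph, if_pos hadj, SimpleGraph.fromRel_adj]
  exact ⟨hadj.ne, Or.inl ⟨rfl, rfl⟩⟩

lemma coverGraph_co {V : Type} (H : SimpleGraph V) (q : V × V) :
    IsCoIntervalGraph ((coverGraph H q).induce (coverGraph H q).support) := by
  classical
  by_cases hadj : Hᶜ.Adj q.1 q.2
  · have hGi : coverGraph H q = SimpleGraph.fromRel (fun x y => x = q.1 ∧ y = q.2) := by
      rw [coverGraph, if_pos hadj]
    have hne : q.1 ≠ q.2 := hadj.ne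
    have hGadj : ∀ a c : V, (coverGraph H q).Adj a c ↔ (a ≠ c ∧
        ((a = q.1 ∧ c = q.2) ∨ (c = q.1 ∧ a = q.2))) := by
      intro a c; rw [hGi, SimpleGraph.fromRel_adj]
    have hsupp : ∀ x : V, x ∈ (coverGraph H q).support ↔ (x = q.1 ∨ x = q.2) := by
      intro x
      rw [SimpleGraph.mem_support]
      constructor
      · rintro ⟨w, hw⟩
        rcases ((hGadj x w).mp hw).2 with ⟨h1, _⟩ | ⟨_, h2⟩
        · exact Or.inl h1
        · exact Or.inr h2
      · rintro (rfl | rfl)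
        · exact ⟨q.2, (hGadj _ _).mpr ⟨hne, Or.inl ⟨rfl, rfl⟩⟩⟩
        · exact ⟨q.1, (hGadj _ _).mpr ⟨hne.symm, Or.inr ⟨rfl, rfl⟩⟩⟩
    refine ⟨fun x => if (x : V) = q.1 then Set.Icc (0:ℝ) 0 else Set.Icc 1 1, ?_, ?_⟩
    · intro x
      by_cases hx : (x : V) = q.1
      · exact ⟨0, 0, le_refl _, by dsimp only; rw [if_pos hx]⟩
      · exact ⟨1, 1, le_refl _, by dsimp only; rw [if_neg hx]⟩
    · intro x y hxy
      have hxy' : (x : V) ≠ (y : V) := fun hh => hxy (Subtype.ext hh)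
      have hx := (hsupp _).mp x.2
      have hy := (hsupp _).mp y.2
      have hadjxy : ((coverGraph H q).induce (coverGraph H q).support).Adj x y := by
        show (coverGraph H q).Adj ↑x ↑y
        refine (hGadj _ _).mpr ⟨hxy', ?_⟩
        rcases hx with hx | hx <;> rcases hy with hy | hy
        · exact absurd (hx.trans hy.symm) hxy'
        · exact Or.inl ⟨hx, hy⟩
        · exact Or.inr ⟨hy, hx⟩
        · exact absurd (hx.trans hy.symm) hxy'
      constructor
      · intro hc
        exact absurd hadjxy hc.2
      · rintro ⟨z, hz1, hz2⟩
        exfalso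
        dsimp only at hz1 hz2
        rcases hx with hx | hx <;> rcases hy with hy | hy
        · exact hxy' (hx.trans hy.symm)
        · have hy1 : ¬((y : V) = q.1) := by rw [hy]; exact hne.symm
          rw [if_pos hx] at hz1
          rw [if_neg hy1] at hz2
          simp only [Set.mem_Icc] at hz1 hz2
          linarith [hz1.1, hz1.2, hz2.1, hz2.2]
        · have hx1 : ¬((x : V) = q.1) := by rw [hx]; exact hne.symm
          rw [if_neg hx1] at hz1
          rw [if_pos hy] at hz2
          simp only [Set.mem_Icc] at hz1 hz2
          linarith [hz1.1, hz1.2, hz2.1, hz2.2]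
        · exact hxy' (hx.trans hy.symm)
  · have hGi : coverGraph H q = ⊥ := by rw [coverGraph, if_neg hadj]
    have hno : ∀ a c : V, ¬ (coverGraph H q).Adj a c := by
      intro a c hac; rw [hGi] at hac; simp at hac
    refine ⟨fun _ => Set.Icc (0:ℝ) 1, ?_, ?_⟩
    · intro x
      exfalso
      obtain ⟨w, hw⟩ := SimpleGraph.mem_support _ |>.mp x.2
      exact hno _ _ hw
    · intro x y _
      exfalso
      obtain ⟨w, hw⟩ := SimpleGraph.mem_support _ |>.mp x.2
      exact hno _ _ hw

lemma exists_cover {V : Type} [Fintype V] (H : SimpleGraph V) :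
    LocalCoverLE H (Fintype.card V * Fintype.card V) := by
  classical
  have e := Fintype.equivFin V
  refine ⟨Fintype.card V * Fintype.card V,
    fun i => coverGraph H (e.symm (finProdFinEquiv.symm i).1, e.symm (finProdFinEquiv.symm i).2),
    fun i => coverGraph_le H _, ?_, fun i => coverGraph_co H _, ?_⟩
  · intro u v hadj
    refine ⟨finProdFinEquiv (e u, e v), ?_⟩
    have harg : ((e.symm (finProdFinEquiv.symm (finProdFinEquiv (e u, e v))).1 : V),
        (e.symm (finProdFinEquiv.symm (finProdFinEquiv (e u, e v))).2 : V)) = (u, v) := by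
      simp only [Equiv.symm_apply_apply]
    dsimp only
    rw [harg]
    exact coverGraph_adj H (u, v) hadj
  · intro v
    calc {i : Fin (Fintype.card V * Fintype.card V) |
          v ∈ (coverGraph H (e.symm (finProdFinEquiv.symm i).1,
            e.symm (finProdFinEquiv.symm i).2)).support}.ncard
        ≤ (Set.univ : Set (Fin (Fintype.card V * Fintype.card V))).ncard :=
          Set.ncard_le_ncard (Set.subset_univ _) Set.finite_univ
      _ = Fintype.card V * Fintype.card V := by simp [Set.ncard_univ]

def decode {V : Type} {s L M : ℕ} (c : V → Fin s → Option (Fin L × Fin M × Fin M)) :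
    SimpleGraph V :=
  (SimpleGraph.fromRel fun u v => ∃ (j j' : Fin s) (p q : Fin L × Fin M × Fin M),
     c u j = some p ∧ c v j' = some q ∧ p.1 = q.1 ∧ (p.2.2 < q.2.1 ∨ q.2.2 < p.2.1))ᶜ

lemma represent {V : Type} [Fintype V] {H : SimpleGraph V} {s : ℕ}
    (h : LocalCoverLE H s) :
    ∃ c : V → Fin s → Option (Fin (s * Fintype.card V + 1) ×
        Fin (2 * (s * Fintype.card V) * Fintype.card V + 1) ×
        Fin (2 * (s * Fintype.card V) * Fintype.card V + 1)),
      decode c = H := by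
  classical
  obtain ⟨t, G, hle, hcov, hco, hload⟩ := h
  set N := Fintype.card V with hN
  have hco' : ∀ i, ∃ I : ((G i).support : Set V) → Set ℝ,
      (∀ v, ∃ a b : ℝ, a ≤ b ∧ I v = Set.Icc a b) ∧
      ∀ u v, u ≠ v → ((((G i).induce (G i).support)ᶜ).Adj u v ↔ (I u ∩ I v).Nonempty) := hco
  choose I hIcc hIadj using hco'
  choose a b hab hIeq using hIcc
  set A : Fin t → V → ℝ := fun i v => if h : v ∈ (G i).support then a i ⟨v, h⟩ else 0 with hA
  set B : Fin t → V → ℝ := fun i v => if h : v ∈ (G i).support then b i ⟨v, h⟩ else 0 with hB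
  have hAeq : ∀ i v (h : v ∈ (G i).support), A i v = a i ⟨v, h⟩ := fun i v h => dif_pos h
  have hBeq : ∀ i v (h : v ∈ (G i).support), B i v = b i ⟨v, h⟩ := fun i v h => dif_pos h
  have hkey : ∀ i (u v : V) (hu : u ∈ (G i).support) (hv : v ∈ (G i).support), u ≠ v →
      ((G i).Adj u v ↔ (B i v < A i u ∨ B i u < A i v)) := by
    intro i u v hu hv hne
    have h2 := hIadj i ⟨u, hu⟩ ⟨v, hv⟩ (Subtype.coe_ne_coe.mp hne)
    simp only [SimpleGraph.compl_adj, SimpleGraph.comap_adj,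
      Function.Embedding.coe_subtype, ne_eq, Subtype.mk.injEq] at h2
    have h3 : ¬ (G i).Adj u v ↔ (I i ⟨u, hu⟩ ∩ I i ⟨v, hv⟩).Nonempty := by
      rw [← h2]
      simp [hne]
    rw [hIeq i ⟨u, hu⟩, hIeq i ⟨v, hv⟩, Set.Icc_inter_Icc, Set.nonempty_Icc] at h3
    have h4 : (G i).Adj u v ↔
        ¬(a i ⟨u, hu⟩ ⊔ a i ⟨v, hv⟩ ≤ b i ⟨u, hu⟩ ⊓ b i ⟨v, hv⟩) := by
      constructor
      · intro hadj hP; exact h3.mpr hP hadj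
      · intro hP; by_contra hn; exact hP (h3.mp hn)
    rw [hAeq i u hu, hAeq i v hv, hBeq i u hu, hBeq i v hv, h4]
    have hab1 := hab i ⟨u, hu⟩
    have hab2 := hab i ⟨v, hv⟩
    simp only [sup_le_iff, le_inf_iff]
    constructor
    · intro hP
      by_contra hc
      push_neg at hc
      exact hP ⟨⟨hab1, hc.2⟩, hc.1, hab2⟩
    · rintro (hlt | hlt) hP
      · linarith [hP.2.1]
      · linarith [hP.1.2]
  set Sv : V → Finset (Fin t) := fun v => Finset.univ.filter (fun i => v ∈ (G i).support) with hSvd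
  have hSv_mem : ∀ v i, i ∈ Sv v ↔ v ∈ (G i).support := by
    intro v i; simp [hSvd]
  have hSv_card : ∀ v, (Sv v).card ≤ s := by
    intro v
    have h1 := hload v
    have h2 : {i : Fin t | v ∈ (G i).support} = ↑(Sv v) := by ext i; simp [hSvd]
    rwa [h2, Set.ncard_coe_finset] at h1
  set U : Finset (Fin t) := Finset.univ.filter (fun i => ((G i).support).Nonempty) with hUd
  have hUmem : ∀ v i, i ∈ Sv v → i ∈ U := by
    intro v i hi
    simp only [hUd, Finset.mem_filter, Finset.mem_univ, true_and]
    exact ⟨v, (hSv_mem v i).mp hi⟩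
  have hU_card : U.card ≤ s * N := by
    have hsub : U ⊆ Finset.univ.biUnion Sv := by
      intro i hi
      simp only [hUd, Finset.mem_filter, Finset.mem_univ, true_and] at hi
      obtain ⟨v, hv⟩ := hi
      exact Finset.mem_biUnion.mpr ⟨v, Finset.mem_univ v, (hSv_mem v i).mpr hv⟩
    calc U.card ≤ _ := Finset.card_le_card hsub
      _ ≤ ∑ v, (Sv v).card := Finset.card_biUnion_le
      _ ≤ ∑ _v : V, s := Finset.sum_le_sum fun v _ => hSv_card v
      _ = N * s := by simp [Finset.sum_const, hN, Finset.card_univ]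
      _ = s * N := Nat.mul_comm N s
  obtain ⟨lab0⟩ : Nonempty (↥U ↪ Fin (s * N + 1)) := by
    apply Function.Embedding.nonempty_of_card_le
    simpa using le_trans hU_card (Nat.le_succ _)
  set lab : Fin t → Fin (s * N + 1) :=
    fun i => if h : i ∈ U then lab0 ⟨i, h⟩ else ⟨0, Nat.succ_pos _⟩ with hlabd
  have hlab : ∀ i ∈ U, ∀ i' ∈ U, lab i = lab i' → i = i' := by
    intro i hi i' hi' he
    simp only [hlabd, dif_pos hi, dif_pos hi'] at he
    simpa [Subtype.ext_iff] using lab0.injective he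
  set F : Finset ℝ := ((U ×ˢ Finset.univ).image fun p : Fin t × V => A p.1 p.2) ∪
      ((U ×ˢ Finset.univ).image fun p : Fin t × V => B p.1 p.2) with hFd
  have hAF : ∀ i v, i ∈ U → A i v ∈ F := fun i v hi =>
    Finset.mem_union_left _ (Finset.mem_image.mpr
      ⟨(i, v), Finset.mem_product.mpr ⟨hi, Finset.mem_univ _⟩, rfl⟩)
  have hBF : ∀ i v, i ∈ U → B i v ∈ F := fun i v hi =>
    Finset.mem_union_right _ (Finset.mem_image.mpr
      ⟨(i, v), Finset.mem_product.mpr ⟨hi, Finset.mem_univ _⟩, rfl⟩)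
  have hF_card : F.card ≤ 2 * (s * N) * N + 1 := by
    have h1 : ((U ×ˢ (Finset.univ : Finset V)).image fun p : Fin t × V => A p.1 p.2).card
        ≤ (s * N) * N := by
      calc _ ≤ (U ×ˢ (Finset.univ : Finset V)).card := Finset.card_image_le
        _ = U.card * N := by rw [Finset.card_product, Finset.card_univ]
        _ ≤ (s * N) * N := Nat.mul_le_mul_right _ hU_card
    have h2 : ((U ×ˢ (Finset.univ : Finset V)).image fun p : Fin t × V => B p.1 p.2).card
        ≤ (s * N) * N := by
      calc _ ≤ (U ×ˢ (Finset.univ : Finset V)).card := Finset.card_image_le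
        _ = U.card * N := by rw [Finset.card_product, Finset.card_univ]
        _ ≤ (s * N) * N := Nat.mul_le_mul_right _ hU_card
    calc F.card ≤ _ + _ := Finset.card_union_le _ _
      _ ≤ (s * N) * N + (s * N) * N := Nat.add_le_add h1 h2
      _ ≤ 2 * (s * N) * N + 1 := by ring_nf; omega
  set rk : ℝ → Fin (2 * (s * N) * N + 1) := fun x =>
    if hx : x ∈ F then Fin.castLE hF_card ((F.orderIsoOfFin rfl).symm ⟨x, hx⟩)
    else ⟨0, Nat.succ_pos _⟩ with hrkd
  have hrk_lt : ∀ x y, x ∈ F → y ∈ F → (rk x < rk y ↔ x < y) := by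
    intro x y hx hy
    simp only [hrkd, dif_pos hx, dif_pos hy]
    have h1 : ((F.orderIsoOfFin rfl).symm ⟨x, hx⟩ < (F.orderIsoOfFin rfl).symm ⟨y, hy⟩)
        ↔ x < y := by rw [OrderIso.lt_iff_lt]; exact Subtype.mk_lt_mk
    rw [← h1]
    simp [Fin.lt_def]
  have hev : ∀ v : V, Nonempty (↥(Sv v) ↪ Fin s) := fun v =>
    Function.Embedding.nonempty_of_card_le (by simpa using hSv_card v)
  set ev : (v : V) → (↥(Sv v) ↪ Fin s) := fun v => (hev v).some with hevd
  set c : V → Fin s → Option (Fin (s * N + 1) ×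
      Fin (2 * (s * N) * N + 1) × Fin (2 * (s * N) * N + 1)) := fun v j =>
    if h : ∃ i : ↥(Sv v), ev v i = j then
      some (lab h.choose.1, rk (A h.choose.1 v), rk (B h.choose.1 v))
    else none with hcd
  have spec1 : ∀ (v : V) (i : ↥(Sv v)),
      c v (ev v i) = some (lab i.1, rk (A i.1 v), rk (B i.1 v)) := by
    intro v i
    have hex : ∃ i' : ↥(Sv v), ev v i' = ev v i := ⟨i, rfl⟩
    have hch : hex.choose = i := (ev v).injective hex.choose_spec
    simp only [hcd]
    rw [dif_pos hex, hch]
  have spec2 : ∀ (v : V) (j : Fin s) x, c v j = some x →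
      ∃ i : ↥(Sv v), x = (lab i.1, rk (A i.1 v), rk (B i.1 v)) := by
    intro v j x hx
    simp only [hcd] at hx
    by_cases hex : ∃ i : ↥(Sv v), ev v i = j
    · rw [dif_pos hex] at hx
      exact ⟨hex.choose, (Option.some_inj.mp hx).symm⟩
    · rw [dif_neg hex] at hx; cases hx
  refine ⟨c, ?_⟩
  have hfr : (SimpleGraph.fromRel fun u v : V =>
      ∃ (j j' : Fin s) (p q : Fin (s * N + 1) ×
        Fin (2 * (s * N) * N + 1) × Fin (2 * (s * N) * N + 1)),
      c u j = some p ∧ c v j' = some q ∧ p.1 = q.1 ∧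
        (p.2.2 < q.2.1 ∨ q.2.2 < p.2.1)) = Hᶜ := by
    have main : ∀ u v : V, u ≠ v →
        (∃ (j j' : Fin s) (p q : Fin (s * N + 1) ×
          Fin (2 * (s * N) * N + 1) × Fin (2 * (s * N) * N + 1)),
          c u j = some p ∧ c v j' = some q ∧ p.1 = q.1 ∧
          (p.2.2 < q.2.1 ∨ q.2.2 < p.2.1)) → Hᶜ.Adj u v := by
      rintro u v hne ⟨j, j', p, q, hp, hq, hl, hlt⟩
      obtain ⟨i, rfl⟩ := spec2 u j p hp
      obtain ⟨i', rfl⟩ := spec2 v j' q hq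
      dsimp only at hl hlt
      have hiU : i.1 ∈ U := hUmem u i.1 i.2
      have hi'U : i'.1 ∈ U := hUmem v i'.1 i'.2
      have hii : i.1 = i'.1 := hlab _ hiU _ hi'U hl
      have hu : u ∈ (G i.1).support := (hSv_mem u i.1).mp i.2
      have hv : v ∈ (G i.1).support := by rw [hii]; exact (hSv_mem v i'.1).mp i'.2
      rw [← hii] at hlt
      have hlt' : B i.1 u < A i.1 v ∨ B i.1 v < A i.1 u := by
        rcases hlt with hlt | hlt
        · exact Or.inl ((hrk_lt _ _ (hBF _ _ hiU) (hAF _ _ hiU)).mp hlt)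
        · exact Or.inr ((hrk_lt _ _ (hBF _ _ hiU) (hAF _ _ hiU)).mp hlt)
      exact hle i.1 ((hkey i.1 u v hu hv hne).mpr (Or.symm hlt'))
    ext u v
    rw [SimpleGraph.fromRel_adj]
    constructor
    · rintro ⟨hne, hr | hr⟩
      · exact main u v hne hr
      · exact (main v u (Ne.symm hne) hr).symm
    · intro hadj
      obtain ⟨i, hadji⟩ := hcov u v hadj
      have hu : u ∈ (G i).support := (G i).mem_support.mpr ⟨v, hadji⟩
      have hv : v ∈ (G i).support := (G i).mem_support.mpr ⟨u, hadji.symm⟩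
      have hne : u ≠ v := hadj.ne
      have hiu : i ∈ Sv u := (hSv_mem u i).mpr hu
      have hiv : i ∈ Sv v := (hSv_mem v i).mpr hv
      have hlt := (hkey i u v hu hv hne).mp hadji
      refine ⟨hne, Or.inl ?_⟩
      refine ⟨ev u ⟨i, hiu⟩, ev v ⟨i, hiv⟩, _, _, spec1 u ⟨i, hiu⟩, spec1 v ⟨i, hiv⟩, rfl, ?_⟩
      dsimp only
      have hiU : i ∈ U := hUmem u i hiu
      rcases hlt with hlt | hlt
      · exact Or.inr ((hrk_lt _ _ (hBF _ _ hiU) (hAF _ _ hiU)).mpr hlt)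
      · exact Or.inl ((hrk_lt _ _ (hBF _ _ hiU) (hAF _ _ hiU)).mpr hlt)
  show (SimpleGraph.fromRel _)ᶜ = H
  rw [hfr, compl_compl]


lemma exists_bad (s : ℕ) :
    ∃ H : SimpleGraph (Fin (2 ^ (72 * s + 70)) ⊕ Fin (2 ^ (72 * s + 70))),
      ¬ LocalCoverLE H s := by
  by_contra hall
  push_neg at hall
  set m := 72 * s + 70 with hm
  set n := 2 ^ m with hn
  have hmn : m < n := by rw [hn]; exact Nat.lt_two_pow_self
  choose c hc using fun H : SimpleGraph (Fin n ⊕ Fin n) => represent (hall H)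
  have hcinj : Function.Injective c := fun H H' hEq => by rw [← hc H, ← hc H', hEq]
  have hinj : Function.Injective (fun f : Fin n → Fin n → Bool => c (pairGraph f)) :=
    hcinj.comp pairGraph_inj
  have hcard := Fintype.card_le_of_injective _ hinj
  simp only [Fintype.card_fun, Fintype.card_option, Fintype.card_prod, Fintype.card_bool,
    Fintype.card_fin, Fintype.card_sum] at hcard
  have h5s : 5 * s + 5 ≤ n := by omega
  have hKle := Kle s n h5s
  have step1 := Nat.pow_le_pow_left (Nat.pow_le_pow_left hKle s) (n + n)
  have step2 : ((n ^ 9) ^ s) ^ (n + n) = 2 ^ (m * (9 * s * (n + n))) := by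
    rw [← pow_mul, ← pow_mul, hn, ← pow_mul, mul_assoc]
  have hlhs : (2 ^ n) ^ n = 2 ^ (n * n) := (pow_mul 2 n n).symm
  have hchain : 2 ^ (n * n) ≤ 2 ^ (m * (9 * s * (n + n))) := by
    rw [← hlhs, ← step2]
    exact le_trans hcard step1
  have hexp : n * n ≤ m * (9 * s * (n + n)) :=
    (Nat.pow_le_pow_iff_right (by omega : 1 < 2)).mp hchain
  have harith : 18 * s * m < n := by rw [hn, hm]; exact arith s
  have hfin : m * (9 * s * (n + n)) < n * n := by
    calc m * (9 * s * (n + n)) = 18 * s * m * n := by ring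
      _ < n * n := (Nat.mul_lt_mul_right (by omega : 0 < n)).mpr harith
  exact absurd hexp (not_le.mpr hfin)


/-- For every positive integer `k` there is a finite graph `H`
with `box_ℓ(H) ≥ k`. -/
theorem stmt_10 (k : ℕ) (hk : 0 < k) :
    ∃ (V : Type) (_ : Fintype V) (H : SimpleGraph V), k ≤ localBoxicity H := by
  obtain ⟨H, hbad⟩ := exists_bad (k - 1)
  refine ⟨_, inferInstance, H, ?_⟩
  rw [localBoxicity]
  refine le_csInf ⟨_, exists_cover H⟩ ?_
  intro b hb
  by_contra hlt
  push_neg at hlt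
  exact hbad (localCoverLE_mono hb (by omega))
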